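/- The cascade (X,f) of Example 2 of the paper is syndetically sensitive: there exists ε > 0 (e.g. ε = 1) such that for every nonempty open subset U of X, the set N(U,ε) = {n ∈ ℕ₀ : diam(fⁿ(U)) > ε} contains all sufficiently large odd numbers shifted appropriately, and in particular is syndetic with gaps bounded by 2. -/

import Mathlib

/-- `A ⊆ ℕ` is syndetic: bounded gaps. -/
def IsSyndetic (A : Set ℕ) : Prop := ∃ N : ℕ, ∀ t : ℕ, ∃ k < N, t + k ∈ A

/-- `A ⊆ ℕ` is thick: contains arbitrarily long runs of consecutive integers. -/
def IsThick (A : Set ℕ) : Prop := ∀ n : ℕ, ∃ t : ℕ, ∀ k ≤ n, t + k ∈ A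

/-- `N(A, ε) = {n : diam (fⁿ(A)) > ε}` for a cascade `f`. -/
def sensTimes {X : Type*} [PseudoMetricSpace X] (f : X → X) (A : Set X) (ε : ℝ) : Set ℕ :=
  {n : ℕ | ENNReal.ofReal ε < EMetric.diam (f^[n] '' A)}

/-- Sensitivity of a cascade. -/
def Sensitive {X : Type*} [PseudoMetricSpace X] (f : X → X) : Prop :=
  ∃ ε > (0 : ℝ), ∀ U : Set X, IsOpen U → U.Nonempty → (sensTimes f U ε).Nonempty

/-- Syndetic sensitivity of a cascade. -/
def SyndeticallySensitive {X : Type*} [PseudoMetricSpace X] (f : X → X) : Prop :=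
  ∃ ε > (0 : ℝ), ∀ U : Set X, IsOpen U → U.Nonempty → IsSyndetic (sensTimes f U ε)

/-- Thick sensitivity of a cascade. -/
def ThicklySensitive {X : Type*} [PseudoMetricSpace X] (f : X → X) : Prop :=
  ∃ ε > (0 : ℝ), ∀ U : Set X, IsOpen U → U.Nonempty → IsThick (sensTimes f U ε)

/-- Cofinite sensitivity of a cascade. -/
def CofinitelySensitive {X : Type*} [PseudoMetricSpace X] (f : X → X) : Prop :=
  ∃ ε > (0 : ℝ), ∀ U : Set X, IsOpen U → U.Nonempty → (sensTimes f U ε)ᶜ.Finite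

/-- The partial sums `𝓛ₙ = L₁ + ⋯ + Lₙ` of Example 2, where `L₀ = 0`, `L₁ = 2` and
`Lₙ = 2^(L₁ + ⋯ + L_{n-1})` for `n ≥ 2`; equivalently `𝓛₀ = 0`, `𝓛₁ = 2` and
`𝓛_{n+1} = 𝓛ₙ + 2^𝓛ₙ` for `n ≥ 1`. -/
def SL : ℕ → ℕ
  | 0 => 0
  | 1 => 2
  | (n + 2) => SL (n + 1) + 2 ^ SL (n + 1)

/-- The space `X` of Example 2:
`X = [0,1] ∪ ⋃_{n≥1} [𝓛_{2n-1}, 𝓛_{2n-1}+2n-1] ∪ ⋃_{n≥1} [𝓛_{2n}, 𝓛_{2n}+1/(2n)]`. -/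
def ExX : Set ℝ :=
  Set.Icc 0 1 ∪
    (⋃ m : ℕ, Set.Icc ((SL (2 * m + 1) : ℝ)) ((SL (2 * m + 1) : ℝ) + (2 * (m : ℝ) + 1))) ∪
    (⋃ m : ℕ, Set.Icc ((SL (2 * m + 2) : ℝ)) ((SL (2 * m + 2) : ℝ) + 1 / (2 * (m : ℝ) + 2)))

/-- `f` satisfies the defining formulas of the map of Example 2 (here `n = m + 1 ≥ 1`):
`f(x) = x + 2` on `[0,1]`,
`f(x) = (x - 𝓛_{2n-1})/(2n(2n-1)) + 𝓛_{2n}` on `[𝓛_{2n-1}, 𝓛_{2n-1}+2n-1]`, and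
`f(x) = 2n(2n+1)(x - 𝓛_{2n}) + 𝓛_{2n+1}` on `[𝓛_{2n}, 𝓛_{2n}+1/(2n)]`. -/
def ExMap (f : ExX → ExX) : Prop :=
  (∀ x : ExX, (x : ℝ) ∈ Set.Icc (0 : ℝ) 1 → (f x : ℝ) = (x : ℝ) + 2) ∧
  (∀ m : ℕ, ∀ x : ExX,
      (x : ℝ) ∈ Set.Icc ((SL (2 * m + 1) : ℝ)) ((SL (2 * m + 1) : ℝ) + (2 * (m : ℝ) + 1)) →
      (f x : ℝ) =
        ((x : ℝ) - (SL (2 * m + 1) : ℝ)) / ((2 * (m : ℝ) + 2) * (2 * (m : ℝ) + 1)) +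
          (SL (2 * m + 2) : ℝ)) ∧
  (∀ m : ℕ, ∀ x : ExX,
      (x : ℝ) ∈ Set.Icc ((SL (2 * m + 2) : ℝ)) ((SL (2 * m + 2) : ℝ) + 1 / (2 * (m : ℝ) + 2)) →
      (f x : ℝ) =
        (2 * (m : ℝ) + 2) * (2 * (m : ℝ) + 3) * ((x : ℝ) - (SL (2 * m + 2) : ℝ)) +
          (SL (2 * m + 3) : ℝ))

/-- The length of the `i`-th interval of Example 2. -/
noncomputable def len (i : ℕ) : ℝ := if i = 0 then 1 else if i % 2 = 1 then (i : ℝ) else 1 / (i : ℝ)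

lemma len_zero : len 0 = 1 := by simp [len]

lemma len_odd (m : ℕ) : len (2 * m + 1) = 2 * (m : ℝ) + 1 := by
  have h1 : 2 * m + 1 ≠ 0 := by omega
  have h2 : (2 * m + 1) % 2 = 1 := by omega
  simp only [len, h1, h2, if_false, if_true, if_neg, if_pos]
  push_cast; ring

lemma len_even (m : ℕ) : len (2 * m + 2) = 1 / (2 * (m : ℝ) + 2) := by
  have h1 : 2 * m + 2 ≠ 0 := by omega
  have h2 : ¬ (2 * m + 2) % 2 = 1 := by omega
  simp only [len, h1, h2, if_false]
  push_cast; ring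

lemma idx_cases (i : ℕ) : i = 0 ∨ (∃ m, i = 2 * m + 1) ∨ (∃ m, i = 2 * m + 2) := by
  rcases Nat.even_or_odd i with ⟨m, hm⟩ | ⟨m, hm⟩
  · rcases Nat.eq_zero_or_pos m with rfl | hm0
    · left; omega
    · right; right; exact ⟨m - 1, by omega⟩
  · right; left; exact ⟨m, by omega⟩

lemma len_pos (i : ℕ) : 0 < len i := by
  rcases idx_cases i with rfl | ⟨m, rfl⟩ | ⟨m, rfl⟩
  · rw [len_zero]; norm_num
  · rw [len_odd]; positivity
  · rw [len_even]; positivity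

lemma SL_zero : ((SL 0 : ℕ) : ℝ) = 0 := by norm_num [SL]

lemma SL_one : ((SL 1 : ℕ) : ℝ) = 2 := by norm_num [SL]

/-- Every point of `X` lies in some interval `[SL i, SL i + len i]`. -/
lemma exists_idx {x : ℝ} (hx : x ∈ ExX) :
    ∃ i : ℕ, (SL i : ℝ) ≤ x ∧ x ≤ (SL i : ℝ) + len i := by
  rcases hx with (h | h) | h
  · exact ⟨0, by simpa [SL_zero, len_zero] using h.1, by simpa [SL_zero, len_zero] using h.2⟩
  · obtain ⟨m, hm⟩ := Set.mem_iUnion.mp h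
    exact ⟨2 * m + 1, by simpa using hm.1, by rw [len_odd]; exact hm.2⟩
  · obtain ⟨m, hm⟩ := Set.mem_iUnion.mp h
    exact ⟨2 * m + 2, by simpa using hm.1, by rw [len_even]; exact hm.2⟩

/-- Every interval `[SL i, SL i + len i]` is contained in `X`. -/
lemma Icc_subset_ExX (i : ℕ) : Set.Icc ((SL i : ℝ)) ((SL i : ℝ) + len i) ⊆ ExX := by
  rcases idx_cases i with rfl | ⟨m, rfl⟩ | ⟨m, rfl⟩
  · intro x hx
    exact Or.inl (Or.inl ⟨by simpa [SL_zero] using hx.1, by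
      have := hx.2; rw [SL_zero, len_zero] at this; linarith⟩)
  · intro x hx
    refine Or.inl (Or.inr (Set.mem_iUnion.mpr ⟨m, ?_, ?_⟩))
    · exact hx.1
    · have := hx.2; rw [len_odd] at this; exact this
  · intro x hx
    refine Or.inr (Set.mem_iUnion.mpr ⟨m, ?_, ?_⟩)
    · exact hx.1
    · have := hx.2; rw [len_even] at this; exact this

/-- One step of the dynamics in normalized coordinates. -/
lemma step_coord (f : ExX → ExX) (hf : ExMap f) (x : ExX) (i : ℕ) (t : ℝ)
    (ht0 : 0 ≤ t) (ht1 : t ≤ 1) (hx : (x : ℝ) = (SL i : ℝ) + t * len i) :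
    (f x : ℝ) = (SL (i + 1) : ℝ) + t * len (i + 1) := by
  rcases idx_cases i with rfl | ⟨m, rfl⟩ | ⟨m, rfl⟩
  · rw [SL_zero, len_zero] at hx
    have hmem : (x : ℝ) ∈ Set.Icc (0 : ℝ) 1 := by
      constructor <;> nlinarith
    rw [hf.1 x hmem, hx]
    have h01 : (0 : ℕ) + 1 = 2 * 0 + 1 := rfl
    rw [h01, len_odd]
    have : ((SL (2 * 0 + 1) : ℕ) : ℝ) = 2 := SL_one
    rw [this]; push_cast; ring
  · have hL : (0 : ℝ) < 2 * (m : ℝ) + 1 := by positivity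
    rw [len_odd] at hx
    have hmem : (x : ℝ) ∈ Set.Icc ((SL (2 * m + 1) : ℝ)) ((SL (2 * m + 1) : ℝ) + (2 * (m : ℝ) + 1)) := by
      constructor <;> nlinarith
    rw [hf.2.1 m x hmem]
    have hi : 2 * m + 1 + 1 = 2 * m + 2 := by omega
    rw [hi, len_even, hx]
    have h1 : (2 * (m : ℝ) + 1) ≠ 0 := by positivity
    have h2 : (2 * (m : ℝ) + 2) ≠ 0 := by positivity
    field_simp
    ring
  · have hL : (0 : ℝ) < 1 / (2 * (m : ℝ) + 2) := by positivity
    rw [len_even] at hx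
    have hmem : (x : ℝ) ∈ Set.Icc ((SL (2 * m + 2) : ℝ)) ((SL (2 * m + 2) : ℝ) + 1 / (2 * (m : ℝ) + 2)) := by
      constructor <;> nlinarith
    rw [hf.2.2 m x hmem]
    have hi : 2 * m + 2 + 1 = 2 * (m + 1) + 1 := by omega
    rw [hi, len_odd, hx]
    have h2 : (2 * (m : ℝ) + 2) ≠ 0 := by positivity
    have hc : 2 * (m + 1) + 1 = 2 * m + 3 := by omega
    rw [hc]
    push_cast
    field_simp
    ring

/-- Iterated dynamics in normalized coordinates. -/
lemma iter_coord (f : ExX → ExX) (hf : ExMap f) :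
    ∀ (n : ℕ) (x : ExX) (i : ℕ) (t : ℝ), 0 ≤ t → t ≤ 1 →
      (x : ℝ) = (SL i : ℝ) + t * len i →
      ((f^[n] x : ExX) : ℝ) = (SL (i + n) : ℝ) + t * len (i + n) := by
  intro n
  induction n with
  | zero => intro x i t _ _ hx; simpa using hx
  | succ n ih =>
    intro x i t ht0 ht1 hx
    rw [Function.iterate_succ_apply]
    have h1 := step_coord f hf x i t ht0 ht1 hx
    have h2 := ih (f x) (i + 1) t ht0 ht1 h1
    have h3 : i + 1 + n = i + (n + 1) := by omega
    rw [h3] at h2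
    exact h2


/-- The cascade of Example 2 is syndetically sensitive (with `ε = 1`): for every nonempty
open `U ⊆ X`, `N(U, 1)` is syndetic; in fact from some point on it meets every pair of
consecutive integers (gaps bounded by 2). -/
theorem ExMap_syndeticallySensitive (f : ExX → ExX) (hc : Continuous f) (hf : ExMap f) :
    ∃ ε > (0 : ℝ), ∀ U : Set ExX, IsOpen U → U.Nonempty →
      IsSyndetic (sensTimes f U ε) ∧
        ∃ m : ℕ, ∀ t : ℕ, ∃ k < 2, m + t + k ∈ sensTimes f U ε := by
  refine ⟨1 / 2, by norm_num, ?_⟩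
  intro U hU hne
  obtain ⟨x0, hx0U⟩ := hne
  obtain ⟨i, hci, hcd⟩ := exists_idx x0.2
  obtain ⟨δ, hδ, hball⟩ := Metric.isOpen_iff.mp hU x0 hx0U
  set x : ℝ := (x0 : ℝ) with hxdef
  set L : ℝ := len i with hLdef
  have hL : 0 < L := len_pos i
  set r : ℝ := min (δ / 2) (L / 2) with hrdef
  have hr : 0 < r := lt_min (by linarith) (by linarith)
  have hrδ : r ≤ δ / 2 := min_le_left _ _
  have hrL : r ≤ L / 2 := min_le_right _ _
  -- choose a second point y in the same interval
  set y : ℝ := if x + r ≤ (SL i : ℝ) + L then x + r else x - r with hydef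
  have hy1 : (SL i : ℝ) ≤ y := by
    rw [hydef]; split_ifs with h
    · linarith
    · push_neg at h; linarith
  have hy2 : y ≤ (SL i : ℝ) + L := by
    rw [hydef]; split_ifs with h
    · exact h
    · linarith
  have hyx : |y - x| = r := by
    rw [hydef]; split_ifs with h
    · rw [show x + r - x = r by ring, abs_of_nonneg hr.le]
    · rw [show x - r - x = -r by ring, abs_neg, abs_of_nonneg hr.le]
  have hyX : y ∈ ExX := Icc_subset_ExX i ⟨hy1, hy2⟩
  set y0 : ExX := ⟨y, hyX⟩ with hy0def
  have hy0U : y0 ∈ U := by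
    apply hball
    rw [Metric.mem_ball, Subtype.dist_eq, Real.dist_eq]
    rw [hyx]; linarith
  -- normalized coordinates
  set t : ℝ := (x - (SL i : ℝ)) / L with htdef
  set s : ℝ := (y - (SL i : ℝ)) / L with hsdef
  have hLne : L ≠ 0 := hL.ne'
  have hxeq : x = (SL i : ℝ) + t * L := by rw [htdef]; field_simp; ring
  have hyeq : y = (SL i : ℝ) + s * L := by rw [hsdef]; field_simp; ring
  have ht0 : 0 ≤ t := div_nonneg (by linarith) hL.le
  have ht1 : t ≤ 1 := by rw [htdef, div_le_one hL]; linarith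
  have hs0 : 0 ≤ s := div_nonneg (by linarith) hL.le
  have hs1 : s ≤ 1 := by rw [hsdef, div_le_one hL]; linarith
  set a : ℝ := r / L with hadef
  have ha : 0 < a := div_pos hr hL
  have hts : |t - s| = a := by
    rw [htdef, hsdef, hadef, div_sub_div_same, abs_div, abs_of_pos hL,
      show x - (SL i : ℝ) - (y - (SL i : ℝ)) = -(y - x) by ring, abs_neg, hyx]
  set M : ℕ := ⌈1 / a⌉₊ with hMdef
  -- key claim: every late enough time landing in an odd interval is a sensitive time
  have key : ∀ n : ℕ, M ≤ n → (i + n) % 2 = 1 → n ∈ sensTimes f U (1 / 2) := by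
    intro n hn hpar
    obtain ⟨m, hm⟩ : ∃ m, i + n = 2 * m + 1 := ⟨(i + n) / 2, by omega⟩
    have hvx : ((f^[n] x0 : ExX) : ℝ) = (SL (i + n) : ℝ) + t * len (i + n) :=
      iter_coord f hf n x0 i t ht0 ht1 hxeq
    have hvy : ((f^[n] y0 : ExX) : ℝ) = (SL (i + n) : ℝ) + s * len (i + n) :=
      iter_coord f hf n y0 i s hs0 hs1 hyeq
    have hlen : len (i + n) = 2 * (m : ℝ) + 1 := by rw [hm, len_odd]
    have hDpos : (0 : ℝ) < 2 * (m : ℝ) + 1 := by positivity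
    have hd : dist (f^[n] x0) (f^[n] y0) = a * (2 * (m : ℝ) + 1) := by
      rw [Subtype.dist_eq, Real.dist_eq, hvx, hvy, hlen,
        show (SL (i + n) : ℝ) + t * (2 * (m : ℝ) + 1) -
          ((SL (i + n) : ℝ) + s * (2 * (m : ℝ) + 1)) = (t - s) * (2 * (m : ℝ) + 1) by ring,
        abs_mul, hts, abs_of_pos hDpos]
    have hbig : (1 : ℝ) ≤ a * (2 * (m : ℝ) + 1) := by
      have h1 : (1 : ℝ) / a ≤ (M : ℝ) := Nat.le_ceil _
      have h2 : (M : ℝ) ≤ ((i + n : ℕ) : ℝ) := by exact_mod_cast Nat.le_trans hn (Nat.le_add_left n i)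
      have h3 : ((i + n : ℕ) : ℝ) = 2 * (m : ℝ) + 1 := by rw [hm]; push_cast; ring
      have h4 : (1 : ℝ) / a ≤ 2 * (m : ℝ) + 1 := by linarith [h3 ▸ h2]
      calc (1 : ℝ) = a * (1 / a) := by field_simp
        _ ≤ a * (2 * (m : ℝ) + 1) := by
            exact mul_le_mul_of_nonneg_left h4 ha.le
    show ENNReal.ofReal (1 / 2) < EMetric.diam (f^[n] '' U)
    calc ENNReal.ofReal (1 / 2) < ENNReal.ofReal (a * (2 * (m : ℝ) + 1)) := by
          rw [ENNReal.ofReal_lt_ofReal_iff (by linarith)]; linarith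
      _ = edist (f^[n] x0) (f^[n] y0) := by rw [edist_dist, hd]
      _ ≤ EMetric.diam (f^[n] '' U) :=
          EMetric.edist_le_diam_of_mem (Set.mem_image_of_mem _ hx0U) (Set.mem_image_of_mem _ hy0U)
  constructor
  · refine ⟨M + 2, fun u => ?_⟩
    by_cases h : (i + (u + M)) % 2 = 1
    · exact ⟨M, by omega, key (u + M) (by omega) h⟩
    · exact ⟨M + 1, by omega, key (u + (M + 1)) (by omega) (by omega)⟩
  · refine ⟨M, fun u => ?_⟩
    by_cases h : (i + (M + u + 0)) % 2 = 1
    · exact ⟨0, by omega, key (M + u + 0) (by omega) h⟩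
    · exact ⟨1, by omega, key (M + u + 1) (by omega) (by omega)⟩
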